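/- Fix an integer s ≥ 2, let 1 ≤ i ≤ p, and let (d,r) be a smooth arithmetical structure on CT(i,s). Then the number of arithmetical structures on CT(p,s) that are descendants of (d,r) (i.e., obtainable from (d,r) by a sequence of p − i subdivision operations at path positions) equals the ballot number B(p−1, p−i). -/

import Mathlib

/-- The conditions defining an arithmetical structure on the coconut tree `CT(p,s)`:
the path vertices are `v_1, …, v_p` with labels `d i`, `r i` for `1 ≤ i ≤ p`, the
leaves are `ℓ_1, …, ℓ_s` with labels `dl j`, `rl j` for `1 ≤ j ≤ s`; `v_i` is adjacent
to `v_{i+1}` for `1 ≤ i ≤ p - 1` and every leaf is adjacent to `v_p`.  All labels are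
positive, at every vertex `d_v * r_v` equals the sum of the `r`-values of its
neighbors, and the gcd of all the `r`-values is `1`. -/
def IsCTArith (p s : ℕ) (d r dl rl : ℕ → ℕ) : Prop :=
  (∀ i, 1 ≤ i → i ≤ p → 0 < d i) ∧
  (∀ i, 1 ≤ i → i ≤ p → 0 < r i) ∧
  (∀ j, 1 ≤ j → j ≤ s → 0 < dl j) ∧
  (∀ j, 1 ≤ j → j ≤ s → 0 < rl j) ∧
  (∀ i, 1 ≤ i → i ≤ p → d i * r i =
      (if 2 ≤ i then r (i - 1) else 0) +
      (if i < p then r (i + 1) else 0) +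
      (if i = p then ∑ j ∈ Finset.Icc 1 s, rl j else 0)) ∧
  (∀ j, 1 ≤ j → j ≤ s → dl j * rl j = r p) ∧
  Nat.gcd ((Finset.Icc 1 p).gcd r) ((Finset.Icc 1 s).gcd rl) = 1

/-- An arithmetical structure on `CT(p,s)` is smooth if `d_i ≥ 2` for all
`1 ≤ i ≤ p - 1` and `d_{ℓ_j} ≥ 2` for all `1 ≤ j ≤ s`. -/
def IsCTSmooth (p s : ℕ) (d dl : ℕ → ℕ) : Prop :=
  (∀ i, 1 ≤ i → i ≤ p - 1 → 2 ≤ d i) ∧ (∀ j, 1 ≤ j → j ≤ s → 2 ≤ dl j)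

/-- An arithmetical-structure candidate on `CT(p,s)`, given by its labels, normalized
so that all labels vanish outside the index ranges `1 ≤ i ≤ p` (path) and
`1 ≤ j ≤ s` (leaves). -/
structure CTStruct (p s : ℕ) : Type where
  d : ℕ → ℕ
  r : ℕ → ℕ
  dl : ℕ → ℕ
  rl : ℕ → ℕ
  d_norm : ∀ i, ¬(1 ≤ i ∧ i ≤ p) → d i = 0
  r_norm : ∀ i, ¬(1 ≤ i ∧ i ≤ p) → r i = 0
  dl_norm : ∀ j, ¬(1 ≤ j ∧ j ≤ s) → dl j = 0
  rl_norm : ∀ j, ¬(1 ≤ j ∧ j ≤ s) → rl j = 0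

/-- `A` is an arithmetical structure on `CT(p,s)`. -/
def CTStruct.IsArith {p s : ℕ} (A : CTStruct p s) : Prop :=
  IsCTArith p s A.d A.r A.dl A.rl

/-- `A` is a smooth arithmetical structure labeling on `CT(p,s)`. -/
def CTStruct.IsSmooth {p s : ℕ} (A : CTStruct p s) : Prop :=
  IsCTSmooth p s A.d A.dl

/-- `B` on `CT(p+1,s)` is obtained from `A` on `CT(p,s)` by a subdivision at
position `i` (`1 ≤ i ≤ p`): for `i > 1` a new path vertex with `r`-value
`r_{i-1} + r_i` is inserted between `v_{i-1}` and `v_i`; for `i = 1` a new initial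
vertex with `r`-value `r_1` is prepended.  Leaf labels are unchanged. -/
def SubdivAt {p s : ℕ} (i : ℕ) (A : CTStruct p s) (B : CTStruct (p + 1) s) : Prop :=
  1 ≤ i ∧ i ≤ p ∧ B.dl = A.dl ∧ B.rl = A.rl ∧
  (∀ j, 1 ≤ j → j ≤ p + 1 →
    B.r j = if j ≤ i - 1 then A.r j
            else if j = i then (if i = 1 then A.r 1 else A.r (i - 1) + A.r i)
            else A.r (j - 1)) ∧
  (∀ j, 1 ≤ j → j ≤ p + 1 →
    B.d j = if j ≤ i - 2 then A.d j
            else if j = i - 1 then A.d (i - 1) + 1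
            else if j = i then 1
            else if j = i + 1 then A.d i + 1
            else A.d (j - 1))

/-- `B` is a descendant of `A` if it is obtained from `A` by a finite sequence of
subdivisions (at path positions). -/
inductive IsDescendant {s : ℕ} : ∀ {p q : ℕ}, CTStruct p s → CTStruct q s → Prop
  | refl {p : ℕ} (A : CTStruct p s) : IsDescendant A A
  | step {p q : ℕ} {A : CTStruct p s} {B : CTStruct q s} {C : CTStruct (q + 1) s}
      (i : ℕ) (hAB : IsDescendant A B) (hBC : SubdivAt i B C) : IsDescendant A C

/-- The ballot number `B(n,k) = ((n-k+1)/(n+1)) * choose (n+k) n`. -/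
def ballot (n k : ℕ) : ℕ := (n - k + 1) * Nat.choose (n + k) n / (n + 1)


-- ==== auxiliary development ====
section CTAux


lemma ballot_zero (n : ℕ) : ballot n 0 = 1 := by simp [ballot]

lemma ballot_one (n : ℕ) (h : 1 ≤ n) : ballot n 1 = n := by
  unfold ballot
  rw [Nat.choose_succ_self_right]
  have h2 : n - 1 + 1 = n := by omega
  rw [h2, Nat.mul_div_cancel _ (by omega)]

lemma key_id (n k : ℕ) (hk : 1 ≤ k) :
    (n + 1) * Nat.choose (n + k) (k - 1) = k * Nat.choose (n + k) k := by
  obtain ⟨m, rfl⟩ : ∃ m, k = m + 1 := ⟨k - 1, by omega⟩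
  have h := Nat.choose_succ_right_eq (n + (m+1)) m
  have h2 : n + (m + 1) - m = n + 1 := by omega
  rw [h2] at h
  simp only [Nat.succ_sub_one]
  linarith

lemma choose_mono_step (m j : ℕ) (h : 2 * j + 2 ≤ m) :
    Nat.choose m j ≤ Nat.choose m (j + 1) :=
  Nat.choose_le_succ_of_lt_half_left (by omega)

lemma ballot_eq (n k : ℕ) (h1 : 1 ≤ k) (h2 : k ≤ n) :
    ballot n k = Nat.choose (n + k) k - Nat.choose (n + k) (k - 1) := by
  have hsymm : Nat.choose (n + k) n = Nat.choose (n + k) k := by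
    rw [← Nat.choose_symm (by omega : n ≤ n + k)]; congr 1; omega
  have hk := key_id n k h1
  have hle : Nat.choose (n + k) (k-1) ≤ Nat.choose (n + k) k := by
    nlinarith [Nat.choose_pos (show k ≤ n + k by omega)]
  have key : (n + 1) * (Nat.choose (n + k) k - Nat.choose (n + k) (k - 1))
      = (n - k + 1) * Nat.choose (n + k) n := by
    rw [hsymm, Nat.mul_sub, hk]
    have h3 : (n - k + 1) = (n + 1) - k := by omega
    rw [h3, Nat.sub_mul]
  unfold ballot
  rw [← key, Nat.mul_div_cancel_left _ (by omega)]

lemma ballot_diag (k : ℕ) (h : 1 ≤ k) : ballot k k = ballot k (k - 1) := by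
  rcases Nat.lt_or_ge k 2 with h2 | h2
  · interval_cases k <;> simp [ballot]
  rw [ballot_eq k k (by omega) le_rfl, ballot_eq k (k-1) (by omega) (by omega)]
  have e1 : k + k = (k + (k-1)) + 1 := by omega
  have e2 : k = (k-1) + 1 := by omega
  have p1 : Nat.choose (k+(k-1)+1) ((k-1)+1)
      = Nat.choose (k+(k-1)) (k-1) + Nat.choose (k+(k-1)) ((k-1)+1) :=
    Nat.choose_succ_succ _ _
  have p2 : Nat.choose (k+(k-1)+1) ((k-2)+1)
      = Nat.choose (k+(k-1)) (k-2) + Nat.choose (k+(k-1)) ((k-2)+1) :=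
    Nat.choose_succ_succ _ _
  have hsym : Nat.choose (k+(k-1)) (k-1) = Nat.choose (k+(k-1)) k := by
    rw [← Nat.choose_symm (by omega : k ≤ k + (k-1))]; congr 1; omega
  have e3 : (k-1)+1 = k := by omega
  have e4 : (k-2)+1 = k-1 := by omega
  rw [e3] at p1; rw [e4] at p2
  rw [e1]
  have e5 : k - 1 - 1 = k - 2 := by omega
  rw [e5]
  omega

lemma ballot_rec (n k : ℕ) (h1 : 1 ≤ k) (h2 : k + 1 ≤ n) :
    ballot n k = ballot (n-1) k + ballot n (k-1) := by
  rcases Nat.lt_or_ge k 2 with hk2 | hk2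
  · obtain rfl : k = 1 := by omega
    rw [ballot_one n (by omega), ballot_one (n-1) (by omega)]
    simp only [Nat.sub_self, ballot_zero]  -- 1-1=0
    omega
  rw [ballot_eq n k (by omega) (by omega),
      ballot_eq (n-1) k (by omega) (by omega),
      ballot_eq n (k-1) (by omega) (by omega)]
  have e1 : n + k = (n - 1 + k) + 1 := by omega
  have e2 : n + (k-1) = n - 1 + k := by omega
  have p1 : Nat.choose ((n-1+k)+1) ((k-1)+1)
      = Nat.choose (n-1+k) (k-1) + Nat.choose (n-1+k) ((k-1)+1) :=
    Nat.choose_succ_succ _ _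
  have p2 : Nat.choose ((n-1+k)+1) ((k-2)+1)
      = Nat.choose (n-1+k) (k-2) + Nat.choose (n-1+k) ((k-2)+1) :=
    Nat.choose_succ_succ _ _
  have e3 : (k-1)+1 = k := by omega
  have e4 : (k-2)+1 = k-1 := by omega
  rw [e3] at p1; rw [e4] at p2
  have m1 : Nat.choose (n-1+k) (k-1) ≤ Nat.choose (n-1+k) k := by
    have := choose_mono_step (n-1+k) (k-1) (by omega)
    rwa [e3] at this
  have m2 : Nat.choose (n-1+k) (k-2) ≤ Nat.choose (n-1+k) (k-1) := by
    have := choose_mono_step (n-1+k) (k-2) (by omega)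
    rwa [e4] at this
  rw [e1, e2]
  have e5 : k - 1 - 1 = k - 2 := by omega
  rw [e5]
  omega


/-- Mediant insertion: insert the sum of two adjacent entries between them. -/
inductive RIns : List ℕ → List ℕ → Prop
  | here (x y : ℕ) (t : List ℕ) : RIns (y :: x :: t) (y :: (x + y) :: x :: t)
  | there (x : ℕ) {t t' : List ℕ} : RIns t t' → RIns (x :: t) (x :: t')

/-- `k` mediant insertions. -/
inductive Reach : ℕ → List ℕ → List ℕ → Prop
  | refl (l : List ℕ) : Reach 0 l l
  | step {k : ℕ} {l c b : List ℕ} : RIns l c → Reach k c b → Reach (k+1) l b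

lemma reach_zero {l b : List ℕ} (h : Reach 0 l b) : b = l := by
  cases h; rfl

lemma reach_succ {k : ℕ} {l b : List ℕ} (h : Reach (k+1) l b) :
    ∃ c, RIns l c ∧ Reach k c b := by
  cases h with
  | step h1 h2 => exact ⟨_, h1, h2⟩

lemma reach_snoc {k : ℕ} {l c b : List ℕ} (h : Reach k l c) (h2 : RIns c b) :
    Reach (k+1) l b := by
  induction h with
  | refl => exact Reach.step h2 (Reach.refl _)
  | step h1 _ ih => exact Reach.step h1 (ih h2)

lemma reach_snoc_inv {k : ℕ} {l b : List ℕ} (h : Reach (k+1) l b) :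
    ∃ c, Reach k l c ∧ RIns c b := by
  induction k generalizing l with
  | zero =>
    obtain ⟨c, h1, h2⟩ := reach_succ h
    exact ⟨l, Reach.refl l, reach_zero h2 ▸ h1⟩
  | succ k ih =>
    obtain ⟨c, h1, h2⟩ := reach_succ h
    obtain ⟨c', h3, h4⟩ := ih h2
    exact ⟨c', Reach.step h1 h3, h4⟩

lemma rins_cons {x : ℕ} {t b : List ℕ} (h : RIns (x :: t) b) :
    ∃ t', b = x :: t' := by
  cases h with
  | here _ _ _ => exact ⟨_, rfl⟩
  | there _ h => exact ⟨_, rfl⟩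

lemma rins_cons' {x : ℕ} {t b : List ℕ} (h : RIns (x :: t) b) :
    (∃ y t', t = y :: t' ∧ b = x :: (y + x) :: y :: t') ∨
    (∃ t', RIns t t' ∧ b = x :: t') := by
  cases h with
  | here _ _ _ => exact Or.inl ⟨_, _, rfl, rfl⟩
  | there _ h => exact Or.inr ⟨_, h, rfl⟩

lemma rins_nil {b : List ℕ} (h : RIns [] b) : False := by cases h

lemma rins_single {x : ℕ} {b : List ℕ} (h : RIns [x] b) : False := by
  cases h with
  | there _ h => exact rins_nil h

/-- the second element can only grow -/
lemma reach_second {k : ℕ} {y x : ℕ} {t b : List ℕ} (h : Reach k (y :: x :: t) b) :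
    ∃ x' t', b = y :: x' :: t' ∧ x ≤ x' := by
  induction k generalizing x t with
  | zero => exact ⟨x, t, reach_zero h, le_rfl⟩
  | succ k ih =>
    obtain ⟨c, h1, h2⟩ := reach_succ h
    rcases rins_cons' h1 with ⟨y', t', het, rfl⟩ | ⟨t', h3, rfl⟩
    · cases het
      obtain ⟨x', t'', rfl, hle⟩ := ih h2
      exact ⟨x', t'', rfl, by omega⟩
    · obtain ⟨t'', rfl⟩ := rins_cons h3
      obtain ⟨x', t₃, rfl, hle⟩ := ih h2
      exact ⟨x', t₃, rfl, hle⟩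

lemma reach_head {k : ℕ} {y : ℕ} {t b : List ℕ} (h : Reach k (y :: t) b) :
    ∃ t', b = y :: t' := by
  induction k generalizing t with
  | zero => exact ⟨t, reach_zero h⟩
  | succ k ih =>
    obtain ⟨c, h1, h2⟩ := reach_succ h
    obtain ⟨t'', rfl⟩ := rins_cons h1
    exact ih h2

/-- lifting insertions/reach under cons -/
lemma reach_cons_lift {k : ℕ} {y : ℕ} {t b : List ℕ} (h : Reach k t b) :
    Reach k (y :: t) (y :: b) := by
  induction h with
  | refl => exact Reach.refl _
  | step h1 _ ih => exact Reach.step (RIns.there y h1) ih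

/-- The key decomposition. -/
lemma reach_cases {k : ℕ} {y x : ℕ} {t b : List ℕ}
    (h : Reach k (y :: x :: t) b) :
    (∃ b', b = y :: b' ∧ Reach k (x :: t) b') ∨
    (∃ k', k = k' + 1 ∧ Reach k' (y :: (x + y) :: x :: t) b) := by
  induction k generalizing t b with
  | zero => exact Or.inl ⟨x :: t, reach_zero h, Reach.refl _⟩
  | succ k ih =>
    obtain ⟨c, h1, h2⟩ := reach_succ h
    rcases rins_cons' h1 with ⟨x₀, t₀, het, rfl⟩ | ⟨c', h3, rfl⟩
    · cases het
      exact Or.inr ⟨k, rfl, h2⟩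
    · -- h3 : RIns (x :: t) c'
      obtain ⟨t₂, rfl⟩ := rins_cons h3
      rcases ih h2 with ⟨b', rfl, h4⟩ | ⟨k', rfl, h4⟩
      · exact Or.inl ⟨b', rfl, Reach.step h3 h4⟩
      · exact Or.inr ⟨k' + 1, rfl,
          Reach.step (RIns.there y (RIns.there (x + y) h3)) h4⟩

lemma rins_finite (l : List ℕ) : {c | RIns l c}.Finite := by
  induction l with
  | nil => convert Set.finite_empty; ext c; simp; exact rins_nil
  | cons y t ih =>
    cases t with
    | nil =>
      convert Set.finite_empty; ext c; simp; exact rins_single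
    | cons x t' =>
      apply Set.Finite.subset (Set.Finite.insert (y :: (x + y) :: x :: t')
        ((Set.Finite.image (y :: ·) ih)))
      intro c hc
      rcases rins_cons' hc with ⟨x₀, t₀, het, rfl⟩ | ⟨c', h3, rfl⟩
      · cases het; exact Set.mem_insert _ _
      · exact Set.mem_insert_of_mem _ ⟨c', h3, rfl⟩

lemma reach_finite (k : ℕ) (l : List ℕ) : {b | Reach k l b}.Finite := by
  induction k generalizing l with
  | zero =>
    apply Set.Finite.subset (Set.finite_singleton l)
    intro b hb; simp [reach_zero hb]
  | succ k ih =>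
    have : {b | Reach (k+1) l b} ⊆ ⋃ c ∈ {c | RIns l c}, {b | Reach k c b} := by
      intro b hb
      obtain ⟨c, h1, h2⟩ := reach_succ hb
      exact Set.mem_biUnion h1 h2
    exact Set.Finite.subset (Set.Finite.biUnion (rins_finite l) fun c _ => ih c) this

lemma reach_count : ∀ (N k : ℕ) (l : List ℕ), 2*k + l.length ≤ N → 2 ≤ l.length →
    (∀ m ∈ l.dropLast, 0 < m) →
    {b | Reach k l b}.ncard = ballot (l.length - 1 + k - 1) k := by
  intro N
  induction N with
  | zero => intro k l h h2 _; omega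
  | succ N ih =>
    intro k l hN hlen hpos
    match k with
    | 0 =>
      have hset : {b | Reach 0 l b} = {l} := by
        ext b; simp only [Set.mem_setOf_eq, Set.mem_singleton_iff]
        exact ⟨reach_zero, fun h => h ▸ Reach.refl l⟩
      rw [hset, Set.ncard_singleton]
      have : l.length - 1 + 0 - 1 = l.length - 2 := by omega
      rw [this, ballot_zero]
    | (k+1) =>
      match l, hlen with
      | (y :: x :: t), _ =>
      match t with
      | [] =>
        have hset : {b | Reach (k+1) [y,x] b} = {b | Reach k [y, x+y, x] b} := by
          ext b
          simp only [Set.mem_setOf_eq]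
          constructor
          · intro hb
            rcases reach_cases hb with ⟨b', rfl, h4⟩ | ⟨k', hk, h4⟩
            · exfalso
              obtain ⟨c, hc, -⟩ := reach_succ h4
              exact rins_single hc
            · obtain rfl : k = k' := by omega
              exact h4
          · intro hb
            exact Reach.step (RIns.here x y []) hb
        rw [hset, ih k [y, x+y, x]
          (by simp only [List.length_cons, List.length_nil] at hN ⊢; omega) (by simp)
          (by intro m hm; simp at hm hpos; rcases hm with rfl | rfl <;> omega)]
        have e1 : ([y,x+y,x] : List ℕ).length - 1 + k - 1 = k + 1 := by
          simp only [List.length_cons, List.length_nil]; omega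
        have e2 : ([y,x] : List ℕ).length - 1 + (k+1) - 1 = k + 1 := by
          simp only [List.length_cons, List.length_nil]; omega
        rw [e1, e2, ballot_diag (k+1) (by omega)]
        congr 1
      | (z :: t₀) =>
        set t : List ℕ := z :: t₀ with ht
        have hy : 0 < y := hpos y (by simp)
        have hS : {b | Reach (k+1) (y :: x :: t) b}
            = (fun b' => y :: b') '' {b' | Reach (k+1) (x :: t) b'}
              ∪ {b | Reach k (y :: (x+y) :: x :: t) b} := by
          ext b
          simp only [Set.mem_setOf_eq, Set.mem_union, Set.mem_image]
          constructor
          · intro hb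
            rcases reach_cases hb with ⟨b', rfl, h4⟩ | ⟨k', hk, h4⟩
            · exact Or.inl ⟨b', h4, rfl⟩
            · obtain rfl : k = k' := by omega
              exact Or.inr h4
          · rintro (⟨b', hb', rfl⟩ | hb)
            · exact reach_cons_lift hb'
            · exact Reach.step (RIns.here x y t) hb
        have hdisj : Disjoint ((fun b' => y :: b') '' {b' | Reach (k+1) (x :: t) b'})
            {b | Reach k (y :: (x+y) :: x :: t) b} := by
          rw [Set.disjoint_left]
          rintro b ⟨b', hb', rfl⟩ hb2
          obtain ⟨t'', rfl⟩ := reach_head hb'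
          obtain ⟨x', t₃, heq, hle⟩ := reach_second hb2
          have : x = x' := by
            injection heq with _ h; injection h
          omega
        rw [hS, Set.ncard_union_eq hdisj
          ((reach_finite _ _).image _) (reach_finite _ _),
          Set.ncard_image_of_injective _ (fun a b h => by injection h)]
        have hpos' : ∀ m ∈ (x :: t).dropLast, 0 < m := by
          intro m hm
          exact hpos m (by simp only [List.dropLast_cons₂, List.mem_cons]; exact Or.inr hm)
        have h1t : 1 ≤ t.length := by rw [ht]; simp only [List.length_cons]; omega
        rw [ih (k+1) (x :: t) (by simp only [List.length_cons] at hN ⊢; omega)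
          (by simp only [List.length_cons]; omega) hpos']
        rw [ih k (y :: (x+y) :: x :: t) (by simp only [List.length_cons] at hN ⊢; omega)
          (by simp only [List.length_cons]; omega)
          (by
            intro m hm
            simp only [List.dropLast_cons₂, List.mem_cons] at hm
            rcases hm with rfl | rfl | hm
            · exact hy
            · omega
            · exact hpos' m hm)]
        have e1 : (y :: x :: t).length - 1 + (k + 1) - 1 = t.length + k + 1 := by
          simp only [List.length_cons]; omega
        have e2 : (x :: t).length - 1 + (k + 1) - 1 = t.length + k := by
          simp only [List.length_cons]; omega
        have e3 : (y :: (x+y) :: x :: t).length - 1 + k - 1 = t.length + k + 1 := by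
          simp only [List.length_cons]; omega
        rw [e1, e2, e3, ballot_rec (t.length + k + 1) (k+1) (by omega) (by omega)]
        have e4 : t.length + k + 1 - 1 = t.length + k := by omega
        have e5 : k + 1 - 1 = k := by omega
        rw [e4, e5]


variable {p s q : ℕ}

lemma r_zero (A : CTStruct p s) : A.r 0 = 0 := A.r_norm 0 (by omega)

lemma r_out (A : CTStruct p s) {m : ℕ} (h : p < m) : A.r m = 0 :=
  A.r_norm m (by omega)

lemma d_out (A : CTStruct p s) {m : ℕ} (h : p < m) : A.d m = 0 :=
  A.d_norm m (by omega)

lemma ctstruct_ext {A B : CTStruct p s} (hd : A.d = B.d) (hr : A.r = B.r)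
    (hdl : A.dl = B.dl) (hrl : A.rl = B.rl) : A = B := by
  cases A; cases B
  simp_all

/-- simplified form of the path equations -/
lemma arith_eq {A : CTStruct p s} (hA : A.IsArith) {m : ℕ} (h1 : 1 ≤ m) (h2 : m ≤ p) :
    A.d m * A.r m = A.r (m - 1) + A.r (m + 1) +
      (if m = p then ∑ j ∈ Finset.Icc 1 s, A.rl j else 0) := by
  have := hA.2.2.2.2.1 m h1 h2
  rw [this]
  congr 1
  congr 1
  · split_ifs with h
    · rfl
    · have : m = 1 := by omega
      rw [this, r_zero]
  · split_ifs with h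
    · rfl
    · have : m = p := by omega
      rw [this, r_out A (by omega)]

/-- converse: construct the original equation from the simplified one -/
lemma arith_of_eqs {A : CTStruct p s}
    (h1 : ∀ i, 1 ≤ i → i ≤ p → 0 < A.d i)
    (h2 : ∀ i, 1 ≤ i → i ≤ p → 0 < A.r i)
    (h3 : ∀ j, 1 ≤ j → j ≤ s → 0 < A.dl j)
    (h4 : ∀ j, 1 ≤ j → j ≤ s → 0 < A.rl j)
    (h5 : ∀ i, 1 ≤ i → i ≤ p → A.d i * A.r i = A.r (i - 1) + A.r (i + 1) +
      (if i = p then ∑ j ∈ Finset.Icc 1 s, A.rl j else 0))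
    (h6 : ∀ j, 1 ≤ j → j ≤ s → A.dl j * A.rl j = A.r p)
    (h7 : Nat.gcd ((Finset.Icc 1 p).gcd A.r) ((Finset.Icc 1 s).gcd A.rl) = 1) :
    A.IsArith := by
  refine ⟨h1, h2, h3, h4, ?_, h6, h7⟩
  intro m hm1 hm2
  rw [h5 m hm1 hm2]
  congr 1
  congr 1
  · split_ifs with h
    · rfl
    · have : m = 1 := by omega
      rw [this, r_zero]
  · split_ifs with h
    · rfl
    · have : m = p := by omega
      rw [this, r_out A (by omega)]


def subdivide (j : ℕ) (A : CTStruct p s) : CTStruct (p+1) s where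
  r := fun m => if 1 ≤ m ∧ m ≤ p+1 then
        (if m < j then A.r m else if m = j then A.r (j-1) + A.r j else A.r (m-1)) else 0
  d := fun m => if 1 ≤ m ∧ m ≤ p+1 then
        (if m + 2 ≤ j then A.d m else if m + 1 = j then A.d (j-1) + 1
         else if m = j then 1 else if m = j + 1 then A.d j + 1 else A.d (m-1)) else 0
  dl := A.dl
  rl := A.rl
  d_norm := fun m h => by simp [h]
  r_norm := fun m h => by simp [h]
  dl_norm := A.dl_norm
  rl_norm := A.rl_norm

variable {A : CTStruct p s} {j : ℕ}

lemma subdivide_r_lt {m : ℕ} (hjp : j ≤ p) (hm : m < j) :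
    (subdivide j A).r m = A.r m := by
  rcases Nat.eq_zero_or_pos m with rfl | hm1
  · rw [r_zero, r_zero]
  · simp only [subdivide]
    rw [if_pos (by omega), if_pos hm]

lemma subdivide_r_self (hj : 1 ≤ j) (hjp : j ≤ p) :
    (subdivide j A).r j = A.r (j-1) + A.r j := by
  simp only [subdivide]
  rw [if_pos (by omega), if_neg (by omega), if_pos trivial]

lemma subdivide_r_gt {m : ℕ} (hj : 1 ≤ j) (hm : j < m) :
    (subdivide j A).r m = A.r (m-1) := by
  rcases Nat.lt_or_ge (p+1) m with h | h
  · simp only [subdivide]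
    rw [if_neg (by omega), r_out A (by omega)]
  · simp only [subdivide]
    rw [if_pos (by omega), if_neg (by omega), if_neg (by omega)]

lemma subdivide_d_lt {m : ℕ} (hm1 : 1 ≤ m) (hm : m + 2 ≤ j) (hjp : j ≤ p) :
    (subdivide j A).d m = A.d m := by
  simp only [subdivide]
  rw [if_pos (by omega), if_pos hm]

lemma subdivide_d_pred (hj : 2 ≤ j) (hjp : j ≤ p) :
    (subdivide j A).d (j-1) = A.d (j-1) + 1 := by
  simp only [subdivide]
  rw [if_pos (by omega), if_neg (by omega), if_pos (by omega)]

lemma subdivide_d_self (hj : 1 ≤ j) (hjp : j ≤ p) :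
    (subdivide j A).d j = 1 := by
  simp only [subdivide]
  rw [if_pos (by omega), if_neg (by omega), if_neg (by omega), if_pos trivial]

lemma subdivide_d_succ (hj : 1 ≤ j) (hjp : j ≤ p) :
    (subdivide j A).d (j+1) = A.d j + 1 := by
  simp only [subdivide]
  rw [if_pos (by omega), if_neg (by omega), if_neg (by omega), if_neg (by omega),
    if_pos trivial]

lemma subdivide_d_gt {m : ℕ} (hj : 1 ≤ j) (hm : j + 1 < m) :
    (subdivide j A).d m = A.d (m-1) := by
  rcases Nat.lt_or_ge (p+1) m with h | h
  · simp only [subdivide]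
    rw [if_neg (by omega), d_out A (by omega)]
  · simp only [subdivide]
    rw [if_pos (by omega), if_neg (by omega), if_neg (by omega), if_neg (by omega),
      if_neg (by omega)]

lemma subdivide_gcd (hj : 1 ≤ j) (hjp : j ≤ p) :
    (Finset.Icc 1 (p+1)).gcd (subdivide j A).r = (Finset.Icc 1 p).gcd A.r := by
  apply Nat.dvd_antisymm
  · apply Finset.dvd_gcd
    intro m hm
    simp only [Finset.mem_Icc] at hm
    rcases Nat.lt_or_ge m j with h | h
    · have : A.r m = (subdivide j A).r m := (subdivide_r_lt hjp h).symm
      rw [this]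
      exact Finset.gcd_dvd (by simp only [Finset.mem_Icc]; omega)
    · have : A.r m = (subdivide j A).r (m+1) := by
        rw [subdivide_r_gt hj (by omega)]
        simp
      rw [this]
      exact Finset.gcd_dvd (by simp only [Finset.mem_Icc]; omega)
  · apply Finset.dvd_gcd
    intro m hm
    simp only [Finset.mem_Icc] at hm
    rcases Nat.lt_or_ge m j with h | h
    · rw [subdivide_r_lt hjp h]
      exact Finset.gcd_dvd (by simp only [Finset.mem_Icc]; omega)
    rcases Nat.eq_or_lt_of_le h with rfl | h2
    · rw [subdivide_r_self hj hjp]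
      apply Nat.dvd_add
      · rcases Nat.eq_or_lt_of_le hj with h3 | h3
        · rw [← h3]
          simp [r_zero]
        · exact Finset.gcd_dvd (by simp only [Finset.mem_Icc]; omega)
      · exact Finset.gcd_dvd (by simp only [Finset.mem_Icc]; omega)
    · rw [subdivide_r_gt hj h2]
      exact Finset.gcd_dvd (by simp only [Finset.mem_Icc]; omega)

lemma subdivide_isArith (hA : A.IsArith) (hj : 1 ≤ j) (hjp : j ≤ p) :
    (subdivide j A).IsArith := by
  have hAeq : ∀ m, 1 ≤ m → m ≤ p → A.d m * A.r m = A.r (m - 1) + A.r (m + 1) +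
      (if m = p then ∑ t ∈ Finset.Icc 1 s, A.rl t else 0) := fun m hm1 hm2 =>
    arith_eq hA hm1 hm2
  obtain ⟨h1, h2, h3, h4, -, h6, h7⟩ := hA
  apply arith_of_eqs
  · -- d positive
    intro m hm1 hm2
    rcases Nat.lt_or_ge (m+2) (j+1) with h | h
    · rw [subdivide_d_lt hm1 (by omega) hjp]; exact h1 m hm1 (by omega)
    rcases Nat.eq_or_lt_of_le h with h' | h'
    · have : m = j - 1 := by omega
      rw [this, subdivide_d_pred (by omega) hjp]; omega
    rcases Nat.lt_trichotomy m j with h'' | rfl | h''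
    · omega
    · rw [subdivide_d_self hj hjp]; omega
    rcases Nat.eq_or_lt_of_le h'' with h3 | h3
    · rw [← h3, subdivide_d_succ hj hjp]; omega
    · rw [subdivide_d_gt hj (by omega)]; exact h1 (m-1) (by omega) (by omega)
  · -- r positive
    intro m hm1 hm2
    rcases Nat.lt_trichotomy m j with h | heq | h
    · rw [subdivide_r_lt hjp h]; exact h2 m hm1 (by omega)
    · rw [heq, subdivide_r_self hj hjp]
      have := h2 j hj hjp; omega
    · rw [subdivide_r_gt hj h]; exact h2 (m-1) (by omega) (by omega)
  · exact h3
  · exact h4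
  · -- main equations
    intro m hm1 hm2
    show _ = _ + _ + (if m = p + 1 then ∑ t ∈ Finset.Icc 1 s, A.rl t else 0)
    rcases Nat.lt_or_ge (m+1) j with hc1 | hc1
    · -- m + 2 ≤ j
      rw [subdivide_d_lt hm1 (by omega) hjp, subdivide_r_lt hjp (by omega),
        subdivide_r_lt hjp (by omega), subdivide_r_lt hjp (by omega),
        if_neg (by omega), hAeq m hm1 (by omega), if_neg (by omega)]
    rcases Nat.eq_or_lt_of_le hc1 with hc2 | hc2
    · -- m + 1 = j
      have hm : m = j - 1 := by omega
      rw [hm, subdivide_d_pred (by omega) hjp, ← hm,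
        subdivide_r_lt hjp (by omega), subdivide_r_lt hjp (by omega),
        show m + 1 = j from hc2.symm, subdivide_r_self hj hjp, if_neg (by omega)]
      have he := hAeq m hm1 (by omega)
      rw [if_neg (by omega)] at he
      have hj1 : A.r (j-1) = A.r m := by rw [hm]
      have hj2 : A.r j = A.r (m+1) := by rw [← hc2]
      have hmul : (A.d m + 1) * A.r m = A.d m * A.r m + A.r m := by ring
      rw [hj1, hj2, hmul, he]
      omega
    rcases Nat.lt_trichotomy m j with hc3 | hc3 | hc3
    · omega
    · -- m = j
      rw [hc3, subdivide_d_self hj hjp, subdivide_r_self hj hjp,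
        subdivide_r_lt hjp (by omega), subdivide_r_gt hj (by omega),
        if_neg (by omega)]
      have : j + 1 - 1 = j := by omega
      rw [this]
      omega
    rcases Nat.eq_or_lt_of_le hc3 with hc4 | hc4
    · -- m = j + 1
      obtain rfl : m = j + 1 := by omega
      have e1 : j + 1 - 1 = j := by omega
      rw [e1, subdivide_d_succ hj hjp, subdivide_r_self hj hjp,
        subdivide_r_gt hj (show j < j + 1 by omega),
        subdivide_r_gt hj (show j < j + 1 + 1 by omega)]
      have e2 : j + 1 + 1 - 1 = j + 1 := by omega
      rw [e1, e2]
      have he := hAeq j hj hjp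
      have hmul : (A.d j + 1) * A.r j = A.d j * A.r j + A.r j := by ring
      have hite : (if j + 1 = p + 1 then ∑ t ∈ Finset.Icc 1 s, A.rl t else 0)
          = (if j = p then ∑ t ∈ Finset.Icc 1 s, A.rl t else 0) :=
        if_congr (by constructor <;> omega) rfl rfl
      rw [hmul, he, hite]
      omega
    · -- j + 1 < m
      rw [subdivide_d_gt hj (by omega), subdivide_r_gt hj (by omega),
        subdivide_r_gt hj (by omega), subdivide_r_gt hj (by omega)]
      have he := hAeq (m-1) (by omega) (by omega)
      have e1 : m - 1 - 1 = m - 2 := by omega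
      have e2 : m - 1 + 1 = m := by omega
      have e3 : m + 1 - 1 = m := by omega
      rw [e1, e2] at he
      rw [e3, he]
      have e4 : m - 1 - 1 = m - 2 := by omega
      rw [e4]
      congr 1
      exact if_congr (by constructor <;> omega) rfl rfl
  · -- leaf equations
    intro t ht1 ht2
    show A.dl t * A.rl t = _
    rw [h6 t ht1 ht2, subdivide_r_gt hj (by omega)]
    simp
  · show Nat.gcd ((Finset.Icc 1 (p+1)).gcd (subdivide j A).r) _ = 1
    rw [subdivide_gcd hj hjp]
    exact h7


lemma subdivAt_subdivide (hj : 1 ≤ j) (hjp : j ≤ p) :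
    SubdivAt j A (subdivide j A) := by
  refine ⟨hj, hjp, rfl, rfl, ?_, ?_⟩
  · intro m hm1 hm2
    rcases Nat.lt_trichotomy m j with h | rfl | h
    · rw [subdivide_r_lt hjp h, if_pos (by omega)]
    · rw [subdivide_r_self hj hjp, if_neg (by omega), if_pos rfl]
      split_ifs with h1
      · rw [h1]; rw [h1] at *; simp [r_zero]
      · rfl
    · rw [subdivide_r_gt hj h, if_neg (by omega), if_neg (by omega)]
  · intro m hm1 hm2
    rcases Nat.lt_or_ge (m+1) j with hc1 | hc1
    · rw [subdivide_d_lt hm1 (by omega) hjp, if_pos (by omega)]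
    rcases Nat.eq_or_lt_of_le hc1 with hc2 | hc2
    · have hm : m = j - 1 := by omega
      rw [hm, subdivide_d_pred (by omega) hjp, if_neg (by omega), if_pos rfl]
    rcases Nat.lt_trichotomy m j with hc3 | rfl | hc3
    · omega
    · rw [subdivide_d_self hj hjp, if_neg (by omega), if_neg (by omega), if_pos rfl]
    rcases Nat.eq_or_lt_of_le hc3 with hc4 | hc4
    · obtain rfl : m = j + 1 := by omega
      rw [subdivide_d_succ hj hjp, if_neg (by omega), if_neg (by omega),
        if_neg (by omega), if_pos rfl]
    · rw [subdivide_d_gt hj (by omega), if_neg (by omega), if_neg (by omega),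
        if_neg (by omega), if_neg (by omega)]

lemma subdivAt_eq {B : CTStruct (p+1) s} (h : SubdivAt j A B) : B = subdivide j A := by
  obtain ⟨hj, hjp, hdl, hrl, hr, hd⟩ := h
  have h2 := subdivAt_subdivide (A := A) hj hjp
  obtain ⟨-, -, -, -, hr2, hd2⟩ := h2
  apply ctstruct_ext
  · funext m
    by_cases hm : 1 ≤ m ∧ m ≤ p + 1
    · rw [hd m hm.1 hm.2, hd2 m hm.1 hm.2]
    · rw [B.d_norm m hm, (subdivide j A).d_norm m hm]
  · funext m
    by_cases hm : 1 ≤ m ∧ m ≤ p + 1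
    · rw [hr m hm.1 hm.2, hr2 m hm.1 hm.2]
    · rw [B.r_norm m hm, (subdivide j A).r_norm m hm]
  · rw [hdl]; rfl
  · rw [hrl]; rfl

lemma rins_of_split (u : List ℕ) (x y : ℕ) (v : List ℕ) :
    RIns (u ++ y :: x :: v) (u ++ y :: (x + y) :: x :: v) := by
  induction u with
  | nil => exact RIns.here x y v
  | cons a u ih => exact RIns.there a ih

lemma rins_split {l l' : List ℕ} (h : RIns l l') :
    ∃ u x y v, l = u ++ y :: x :: v ∧ l' = u ++ y :: (x + y) :: x :: v := by
  induction h with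
  | here x y t => exact ⟨[], x, y, t, rfl, rfl⟩
  | there a _ ih =>
    obtain ⟨u, x, y, v, rfl, rfl⟩ := ih
    exact ⟨a :: u, x, y, v, rfl, rfl⟩

/-- the reversed list of `r`-values, ending with the sentinel `r 0 = 0`. -/
def Flist (A : CTStruct q s) : List ℕ := (List.range (q+1)).map (fun t => A.r (q - t))

lemma Flist_length (A : CTStruct q s) : (Flist A).length = q + 1 := by
  simp [Flist]

lemma Flist_get (A : CTStruct q s) {m : ℕ} (hm : m < q + 1) :
    (Flist A)[m]'(by simp [Flist_length, hm]) = A.r (q - m) := by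
  simp [Flist]

/-- the key computation: `Flist` of a subdivision is a mediant insertion. -/
lemma Flist_subdivide (A : CTStruct q s) (hj : 1 ≤ j) (hjq : j ≤ q) :
    Flist (subdivide j A) = (Flist A).take (q - j) ++
      A.r j :: (A.r (j-1) + A.r j) :: A.r (j-1) :: (Flist A).drop (q - j + 2) := by
  apply List.ext_getElem
  · simp only [Flist_length, List.length_append, List.length_take, List.length_cons,
      List.length_drop]
    omega
  intro m hm1 hm2
  rw [Flist_length] at hm1
  have hsub : (Flist (subdivide j A))[m]'(by rw [Flist_length]; omega)
      = (subdivide j A).r (q + 1 - m) := Flist_get _ (by omega)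
  rw [hsub]
  rcases Nat.lt_or_ge m (q - j) with h | h
  · rw [List.getElem_append_left (by simp [Flist_length]; omega)]
    rw [List.getElem_take, Flist_get A (by omega)]
    rw [subdivide_r_gt hj (by omega)]
    congr 1
    omega
  have hlen : ((Flist A).take (q - j)).length = q - j := by
    simp [Flist_length]; omega
  rcases Nat.eq_or_lt_of_le h with h1 | h1
  · rw [List.getElem_append_right (by omega)]
    simp only [hlen, ← h1, Nat.sub_self, List.getElem_cons_zero]
    rw [subdivide_r_gt hj (by omega)]
    congr 1
    omega
  rcases Nat.eq_or_lt_of_le h1 with h2 | h2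
  · rw [List.getElem_append_right (by omega)]
    have : m - ((Flist A).take (q-j)).length = 1 := by omega
    simp only [this, List.getElem_cons_succ, List.getElem_cons_zero]
    have : q + 1 - m = j := by omega
    rw [this, subdivide_r_self hj hjq]
  rcases Nat.eq_or_lt_of_le h2 with h3 | h3
  · rw [List.getElem_append_right (by omega)]
    have : m - ((Flist A).take (q-j)).length = 2 := by omega
    simp only [this, List.getElem_cons_succ, List.getElem_cons_zero]
    have e : q + 1 - m = j - 1 := by omega
    rw [e, subdivide_r_lt hjq (by omega)]
  · rw [List.getElem_append_right (by omega)]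
    have e : m - ((Flist A).take (q-j)).length = (m - (q-j) - 3) + 1 + 1 + 1 := by omega
    simp only [e, List.getElem_cons_succ]
    rw [List.getElem_drop]
    rw [Flist_get A (by omega)]
    have hc : q + 1 - m < j := by omega
    rw [subdivide_r_lt hjq hc]
    congr 1
    omega

lemma Flist_split (A : CTStruct q s) (hj : 1 ≤ j) (hjq : j ≤ q) :
    Flist A = (Flist A).take (q - j) ++
      A.r j :: A.r (j-1) :: (Flist A).drop (q - j + 2) := by
  apply List.ext_getElem
  · simp only [Flist_length, List.length_append, List.length_take, List.length_cons,
      List.length_drop]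
    omega
  intro m hm1 hm2
  rw [Flist_length] at hm1
  rcases Nat.lt_or_ge m (q - j) with h | h
  · rw [List.getElem_append_left (by simp [Flist_length]; omega)]
    rw [List.getElem_take]
  have hlen : ((Flist A).take (q - j)).length = q - j := by
    simp [Flist_length]; omega
  rcases Nat.eq_or_lt_of_le h with h1 | h1
  · rw [List.getElem_append_right (by omega)]
    simp only [hlen, ← h1, Nat.sub_self, List.getElem_cons_zero]
    rw [Flist_get A (by omega)]
    congr 1
    omega
  rcases Nat.eq_or_lt_of_le h1 with h2 | h2
  · rw [List.getElem_append_right (by omega)]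
    have e : m - ((Flist A).take (q-j)).length = 1 := by omega
    simp only [e, List.getElem_cons_succ, List.getElem_cons_zero]
    rw [Flist_get A (by omega)]
    congr 1
    omega
  · rw [List.getElem_append_right (by omega)]
    have e : m - ((Flist A).take (q-j)).length = (m - (q-j) - 2) + 1 + 1 := by omega
    simp only [e, List.getElem_cons_succ]
    rw [List.getElem_drop]
    congr 1
    omega

lemma rins_Flist (A : CTStruct q s) (hj : 1 ≤ j) (hjq : j ≤ q) :
    RIns (Flist A) (Flist (subdivide j A)) := by
  rw [Flist_subdivide A hj hjq]
  nth_rewrite 1 [Flist_split A hj hjq]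
  have : A.r (j-1) + A.r j = A.r (j-1) + A.r j := rfl
  exact rins_of_split _ (A.r (j-1)) (A.r j) _

lemma rins_Flist_inv {A : CTStruct q s} {c : List ℕ} (h : RIns (Flist A) c) :
    ∃ j, 1 ≤ j ∧ j ≤ q ∧ c = Flist (subdivide j A) := by
  obtain ⟨u, x, y, v, heq, rfl⟩ := rins_split h
  have hlen : u.length + 2 + v.length = q + 1 := by
    have := congrArg List.length heq
    simp only [Flist_length, List.length_append, List.length_cons] at this
    omega
  set t := u.length with htdef
  refine ⟨q - t, by omega, by omega, ?_⟩
  have hu : u = (Flist A).take t := by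
    rw [heq, List.take_left' rfl]
  have hv : v = (Flist A).drop (t + 2) := by
    rw [heq, show u ++ y :: x :: v = (u ++ [y, x]) ++ v by simp,
      List.drop_left' (by simp [htdef])]
  have hsplit := Flist_split A (j := q - t) (by omega) (by omega)
  rw [show q - (q - t) = t by omega, ← hu, ← hv, heq] at hsplit
  have h2 := List.append_cancel_left hsplit
  injection h2 with hy h3
  injection h3 with hx hv2
  rw [Flist_subdivide A (by omega) (by omega), show q - (q - t) = t by omega,
    ← hu, ← hv, ← hy, ← hx]

lemma desc_labels {i s : ℕ} {A : CTStruct i s} {q : ℕ} {B : CTStruct q s}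
    (h : IsDescendant A B) : B.dl = A.dl ∧ B.rl = A.rl := by
  induction h with
  | refl => exact ⟨rfl, rfl⟩
  | step j hAB hBC ih => exact ⟨hBC.2.2.1.trans ih.1, hBC.2.2.2.1.trans ih.2⟩

lemma desc_arith {i s : ℕ} {A : CTStruct i s} {q : ℕ} {B : CTStruct q s}
    (h : IsDescendant A B) (hA : A.IsArith) : B.IsArith := by
  induction h with
  | refl => exact hA
  | step j hAB hBC ih =>
    rw [subdivAt_eq hBC]
    exact subdivide_isArith (ih hA) hBC.1 hBC.2.1

lemma desc_reach {i s : ℕ} {A : CTStruct i s} {q : ℕ} {B : CTStruct q s}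
    (h : IsDescendant A B) : i ≤ q ∧ Reach (q - i) (Flist A) (Flist B) := by
  induction h with
  | refl => exact ⟨le_rfl, by rw [Nat.sub_self]; exact Reach.refl _⟩
  | @step q' A' B' C' j hAB hBC ih =>
    obtain ⟨hle, hr⟩ := ih
    refine ⟨by omega, ?_⟩
    rw [subdivAt_eq hBC, show q' + 1 - i = (q' - i) + 1 by omega]
    exact reach_snoc hr (rins_Flist _ hBC.1 hBC.2.1)

lemma flist_inj {p s : ℕ} {B₁ B₂ : CTStruct p s} (h1 : B₁.IsArith) (h2 : B₂.IsArith)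
    (hdl : B₁.dl = B₂.dl) (hrl : B₁.rl = B₂.rl) (hF : Flist B₁ = Flist B₂) :
    B₁ = B₂ := by
  have hr : B₁.r = B₂.r := by
    simp only [Flist] at hF
    funext m
    by_cases hm : 1 ≤ m ∧ m ≤ p
    · have := (List.map_inj_left).1 hF (p - m) (by simp)
      rwa [show p - (p - m) = m by omega] at this
    · rw [B₁.r_norm m hm, B₂.r_norm m hm]
  apply ctstruct_ext _ hr hdl hrl
  funext m
  by_cases hm : 1 ≤ m ∧ m ≤ p
  · have e1 := arith_eq h1 hm.1 hm.2
    have e2 := arith_eq h2 hm.1 hm.2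
    rw [hr, hrl] at e1
    rw [← e2] at e1
    exact Nat.eq_of_mul_eq_mul_right (h2.2.1 m hm.1 hm.2) e1
  · rw [B₁.d_norm m hm, B₂.d_norm m hm]

lemma surj_aux {s : ℕ} : ∀ (k : ℕ) {q : ℕ} (A' : CTStruct q s), A'.IsArith →
    ∀ b, Reach k (Flist A') b →
    ∃ B : CTStruct (q + k) s, B.IsArith ∧ IsDescendant A' B ∧ Flist B = b := by
  intro k
  induction k with
  | zero =>
    intro q A' hA' b hb
    exact ⟨A', hA', IsDescendant.refl A', (reach_zero hb).symm⟩
  | succ k ih =>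
    intro q A' hA' b hb
    obtain ⟨c, hc1, hc2⟩ := reach_snoc_inv hb
    obtain ⟨B', hB'a, hB'd, hB'F⟩ := ih A' hA' c hc1
    rw [← hB'F] at hc2
    obtain ⟨j, hj1, hj2, rfl⟩ := rins_Flist_inv hc2
    exact ⟨subdivide j B', subdivide_isArith hB'a hj1 hj2,
      IsDescendant.step j hB'd (subdivAt_subdivide hj1 hj2), rfl⟩

end CTAux

theorem ct_count_descendants (s i p : ℕ) (hs : 2 ≤ s) (hi1 : 1 ≤ i) (hip : i ≤ p)
    (A : CTStruct i s) (hA : A.IsArith) (hAsm : A.IsSmooth) :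
    Nat.card {B : CTStruct p s // B.IsArith ∧ IsDescendant A B} =
      ballot (p - 1) (p - i) := by
  obtain ⟨k, rfl⟩ : ∃ k, p = i + k := ⟨p - i, by omega⟩
  have hik : i + k - i = k := by omega
  rw [hik]
  have hrA : ∀ m, 1 ≤ m → m ≤ i → 0 < A.r m := hA.2.1
  have hcard : Nat.card {B : CTStruct (i + k) s // B.IsArith ∧ IsDescendant A B}
      = Nat.card {b : List ℕ // Reach k (Flist A) b} := by
    apply Nat.card_congr
    refine Equiv.ofBijective (fun B => ⟨Flist B.1, ?_⟩) ⟨?_, ?_⟩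
    · have h2 := (desc_reach B.2.2).2
      rwa [show i + k - i = k by omega] at h2
    · rintro ⟨B₁, hB₁⟩ ⟨B₂, hB₂⟩ h
      simp only [Subtype.mk.injEq] at h ⊢
      have l1 := desc_labels hB₁.2
      have l2 := desc_labels hB₂.2
      exact flist_inj hB₁.1 hB₂.1 (l1.1.trans l2.1.symm) (l1.2.trans l2.2.symm) h
    · rintro ⟨b, hb⟩
      obtain ⟨B, hBa, hBd, hBF⟩ := surj_aux k A hA b hb
      exact ⟨⟨B, hBa, hBd⟩, Subtype.ext hBF⟩
  rw [hcard]
  have hcoe : Nat.card {b : List ℕ // Reach k (Flist A) b}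
      = {b : List ℕ | Reach k (Flist A) b}.ncard := Nat.card_coe_set_eq _
  rw [hcoe]
  have hpos : ∀ m ∈ (Flist A).dropLast, 0 < m := by
    intro m hm
    obtain ⟨n, hn, heq⟩ := List.getElem_of_mem hm
    rw [← heq, List.getElem_dropLast]
    have hn' : n < i := by
      simp only [List.length_dropLast, Flist_length] at hn
      omega
    rw [Flist_get A (by omega)]
    exact hrA (i - n) (by omega) (by omega)
  rw [reach_count (2 * k + (Flist A).length) k (Flist A) le_rfl
    (by rw [Flist_length]; omega) hpos, Flist_length]
  have e : i + 1 - 1 + k - 1 = i + k - 1 := by omega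
  rw [e]
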